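/- Let X be a locally convex topological vector space, I an ideal on ω, (x_n) a sequence with {n : x_n ∉ K} ∈ I for some compact K ⊆ X, and 𝓕 a rough family with every F_η closed and convex. Then L_x(I,𝓕) = {η ∈ X : core_x(I) ⊆ F_η}, where core_x(I) = ⋂_{E ∈ I*} closed convex hull of {x_n : n ∈ E}. -/

import Mathlib

/-- An ideal on ω: closed under subsets and finite unions, contains all finite sets,
and does not contain ω itself. -/
def IsIdeal (I : Set (Set ℕ)) : Prop :=
  (∀ A B : Set ℕ, A ⊆ B → B ∈ I → A ∈ I) ∧
  (∀ A ∈ I, ∀ B ∈ I, A ∪ B ∈ I) ∧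
  (∀ A : Set ℕ, A.Finite → A ∈ I) ∧
  (Set.univ : Set ℕ) ∉ I

/-- `(I, F)`-convergence of the sequence `x` with roughness set `F`:
for every open `U ⊇ F`, the set `{n | x n ∉ U}` belongs to `I`. -/
def RoughLim {X : Type*} [TopologicalSpace X] (I : Set (Set ℕ)) (F : Set X)
    (x : ℕ → X) : Prop :=
  ∀ U : Set X, IsOpen U → F ⊆ U → {n | x n ∉ U} ∈ I

/-- `p` is an `I`-cluster point of `x`. -/
def IdealClusterPt {X : Type*} [TopologicalSpace X] (I : Set (Set ℕ)) (x : ℕ → X)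
    (p : X) : Prop :=
  ∀ U : Set X, IsOpen U → p ∈ U → {n | x n ∈ U} ∉ I

lemma aux_biUnion (I : Set (Set ℕ)) (hI : IsIdeal I) {ι : Type*} (s : Finset ι)
    (f : ι → Set ℕ) (hf : ∀ i ∈ s, f i ∈ I) : (⋃ i ∈ s, f i) ∈ I := by
  classical
  induction s using Finset.induction with
  | empty => simpa using hI.2.2.1 ∅ Set.finite_empty
  | @insert a s ha ih =>
    rw [Finset.set_biUnion_insert]
    exact hI.2.1 _ (hf a (Finset.mem_insert_self a s)) _
      (ih fun i hi => hf i (Finset.mem_insert_of_mem hi))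

theorem stmt15 {X : Type*} [AddCommGroup X] [Module ℝ X] [TopologicalSpace X]
    [IsTopologicalAddGroup X] [ContinuousSMul ℝ X] [LocallyConvexSpace ℝ X]
    (I : Set (Set ℕ)) (hI : IsIdeal I) (x : ℕ → X)
    (K : Set X) (hK : IsCompact K) (hxK : {n | x n ∉ K} ∈ I)
    (F : X → Set X) (hF : ∀ η, η ∈ F η)
    (hcl : ∀ η, IsClosed (F η)) (hconv : ∀ η, Convex ℝ (F η)) :
    {η | RoughLim I (F η) x} =
      {η | (⋂ E ∈ {S : Set ℕ | Sᶜ ∈ I}, closure (convexHull ℝ (x '' E))) ⊆ F η} := by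
  classical
  obtain ⟨hdown, hunion, hfin, huniv⟩ := hI
  ext η
  simp only [Set.mem_setOf_eq]
  constructor
  · -- RoughLim → core ⊆ F η
    intro hlim p hp
    by_contra hpF
    obtain ⟨f, u, hfu, hb⟩ := geometric_hahn_banach_point_closed (hconv η) (hcl η) hpF
    have hU : IsOpen {z | u < f z} := isOpen_lt continuous_const f.continuous
    have hE : {n | x n ∉ {z | u < f z}} ∈ I := hlim _ hU fun z hz => hb z hz
    have hmem : p ∈ closure (convexHull ℝ (x '' {n | u < f (x n)})) := by
      refine Set.mem_iInter₂.1 hp {n | u < f (x n)} ?_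
      show {n | u < f (x n)}ᶜ ∈ I
      have heq : {n | u < f (x n)}ᶜ = {n | x n ∉ {z | u < f z}} := by
        ext n; simp
      rw [heq]; exact hE
    have hsub : closure (convexHull ℝ (x '' {n | u < f (x n)})) ⊆ {z | u ≤ f z} := by
      refine closure_minimal (convexHull_min ?_ ?_) (isClosed_le continuous_const f.continuous)
      · rintro z ⟨n, hn, rfl⟩
        exact le_of_lt (show u < f (x n) from hn)
      · exact convex_halfSpace_ge ⟨f.map_add, f.map_smul⟩ u
    exact hfu.not_ge (hsub hmem)
  · -- core ⊆ F η → RoughLim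
    intro hcore U hUopen hFU
    by_contra hA
    set B := {n | x n ∉ U} ∩ {n | x n ∈ K} with hBdef
    have hBI : B ∉ I := by
      intro h
      refine hA (hdown _ _ ?_ (hunion _ h _ hxK))
      intro n hn
      by_cases hcase : x n ∈ K
      · exact Or.inl ⟨hn, hcase⟩
      · exact Or.inr hcase
    have hC : IsCompact (K ∩ Uᶜ) := hK.inter_right hUopen.isClosed_compl
    -- find an I-"cluster point" in K ∩ Uᶜ
    have hclus : ∃ p ∈ K ∩ Uᶜ, ∀ V : Set X, IsOpen V → p ∈ V →
        (B ∩ {n | x n ∈ V}) ∉ I := by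
      by_contra hno
      push_neg at hno
      choose V hVopen hVmem hVI using fun q : ↥(K ∩ Uᶜ) => hno q q.2
      obtain ⟨t, ht⟩ := hC.elim_finite_subcover V hVopen
        (fun q hq => Set.mem_iUnion.2 ⟨⟨q, hq⟩, hVmem ⟨q, hq⟩⟩)
      refine hBI (hdown _ _ ?_ (aux_biUnion I ⟨hdown, hunion, hfin, huniv⟩ t (fun i => B ∩ {n | x n ∈ V i})
        (fun i _ => hVI i)))
      intro n hn
      have hx : x n ∈ K ∩ Uᶜ := ⟨hn.2, hn.1⟩
      obtain ⟨i, hit, hxi⟩ := Set.mem_iUnion₂.1 (ht hx)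
      exact Set.mem_iUnion₂.2 ⟨i, hit, hn, hxi⟩
    obtain ⟨p, hpC, hp⟩ := hclus
    have hpcore : p ∈ ⋂ E ∈ {S : Set ℕ | Sᶜ ∈ I}, closure (convexHull ℝ (x '' E)) := by
      refine Set.mem_iInter₂.2 fun E hE => ?_
      refine closure_mono (Set.Subset.trans (Set.Subset.refl _)
        (subset_convexHull ℝ _)) ?_
      rw [mem_closure_iff]
      intro V hVopen hpV
      have hBV : (B ∩ {n | x n ∈ V}) ∉ I := hp V hVopen hpV
      have : ¬ (B ∩ {n | x n ∈ V}) ⊆ Eᶜ := fun hsub => hBV (hdown _ _ hsub hE)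
      obtain ⟨n, hnB, hnE⟩ := Set.not_subset.1 this
      exact ⟨x n, hnB.2, ⟨n, not_not.1 hnE, rfl⟩⟩
    have : p ∈ U := hFU (hcore hpcore)
    exact hpC.2 this
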